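/- Let K ≥ 3, T ≥ 1, σ > 0, τ ∈ ℝ, and let Δ ∈ ℝ^K with Δ_k > 0 for all k be such that there exists a nondecreasing real sequence (m_k)_{k=1}^K with |m_k − τ| = Δ_k for every k ∈ [K]. Then for every fixed-budget strategy π with horizon T there exists a bandit problem ν whose arms are Gaussian measures on ℝ with variance σ², whose means (μ_k)_{k=1}^K are nondecreasing and satisfy |μ_k − τ| = Δ_k for every k, such that the probability of error satisfies e_T^{ν,π} ≥ (1/4)·exp(−T·Δ_min²/σ²), where Δ_min = min_{k∈[K]} Δ_k. -/

import Mathlib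

open MeasureTheory ProbabilityTheory

/-- Law of the history `(Y_1, …, Y_n)` of a fixed-budget strategy: at round `t + 1`, given
the past history `h : Fin t → ℝ`, the sampling rule `π` selects the arm `π t h` and the
observation is drawn from `ν (π t h)` (sequential / Ionescu–Tulcea composition). -/
noncomputable def histMeasure {K : ℕ} (ν : Fin K → Measure ℝ)
    (π : (t : ℕ) → (Fin t → ℝ) → Fin K) : (n : ℕ) → Measure (Fin n → ℝ)
  | 0 => Measure.dirac (fun i => Fin.elim0 i)
  | n + 1 => (histMeasure ν π n).bind (fun h => (ν (π n h)).map (Fin.snoc h))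

/-- The error event: some arm is misclassified. `Qhat y k = true` encodes the label `+1`
(i.e. the prediction that `μ k ≥ τ`), `false` encodes the label `-1`. -/
def errSet {K T : ℕ} (Qhat : (Fin T → ℝ) → Fin K → Bool) (μ : Fin K → ℝ) (τ : ℝ) :
    Set (Fin T → ℝ) :=
  {y | ∃ k, (Qhat y k = true) ≠ (τ ≤ μ k)}

open scoped ENNReal NNReal

namespace MonotoneLB

variable {K : ℕ}




lemma measurable_comp_cases {α : Type*} [MeasurableSpace α] {g : α → Fin K}
    (hg : Measurable g) {F : Fin K → α → ℝ≥0∞} (hF : ∀ k, Measurable (F k)) :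
    Measurable fun a => F (g a) a := by
  have h : (fun a => F (g a) a) = fun a => ∑ k : Fin K, (g ⁻¹' {k}).indicator (F k) a := by
    funext a
    rw [Finset.sum_eq_single_of_mem (g a) (Finset.mem_univ _) ?_]
    · simp [Set.indicator_of_mem]
    · intro k _ hk
      exact Set.indicator_of_notMem
        (by simp only [Set.mem_preimage, Set.mem_singleton_iff]; exact fun h => hk h.symm) _
  rw [h]
  exact Finset.measurable_sum _ fun k _ => (hF k).indicator (hg (measurableSet_singleton k))

lemma measurable_snoc_uncurry {n : ℕ} :
    Measurable fun p : (Fin n → ℝ) × ℝ => (Fin.snoc p.1 p.2 : Fin (n+1) → ℝ) := by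
  refine measurable_pi_lambda _ fun i => ?_
  induction i using Fin.lastCases with
  | last => simpa only [Fin.snoc_last] using measurable_snd
  | cast s => simp only [Fin.snoc_castSucc]; exact (measurable_pi_apply s).comp measurable_fst

lemma measurable_snoc_right {n : ℕ} (h : Fin n → ℝ) :
    Measurable fun x : ℝ => (Fin.snoc h x : Fin (n+1) → ℝ) :=
  measurable_snoc_uncurry.comp (measurable_const.prodMk measurable_id)

lemma measurable_histKernel {n : ℕ} (ν : Fin K → Measure ℝ) [∀ k, SFinite (ν k)]
    {f : (Fin n → ℝ) → Fin K} (hf : Measurable f) :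
    Measurable fun h : Fin n → ℝ => ((ν (f h)).map (Fin.snoc h) : Measure (Fin (n+1) → ℝ)) := by
  refine Measure.measurable_measure.2 fun s hs => ?_
  have h1 : ∀ h : Fin n → ℝ, ((ν (f h)).map (Fin.snoc h) : Measure (Fin (n+1) → ℝ)) s
      = ν (f h) (Prod.mk h ⁻¹'
        ((fun p : (Fin n → ℝ) × ℝ => (Fin.snoc p.1 p.2 : Fin (n+1) → ℝ)) ⁻¹' s)) := by
    intro h
    rw [Measure.map_apply (measurable_snoc_right h) hs]
    rfl
  simp_rw [h1]
  exact measurable_comp_cases hf fun k =>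
    measurable_measure_prodMk_left (measurable_snoc_uncurry hs)

noncomputable def likeli (r : Fin K → ℝ → ℝ≥0∞) (π : (t : ℕ) → (Fin t → ℝ) → Fin K) :
    (n : ℕ) → (Fin n → ℝ) → ℝ≥0∞
  | 0 => fun _ => 1
  | n + 1 => fun y =>
      likeli r π n (fun s => y s.castSucc) * r (π n fun s => y s.castSucc) (y (Fin.last n))

lemma likeli_snoc (r : Fin K → ℝ → ℝ≥0∞) (π : (t : ℕ) → (Fin t → ℝ) → Fin K)
    (n : ℕ) (h : Fin n → ℝ) (x : ℝ) :
    likeli r π (n + 1) (Fin.snoc h x) = likeli r π n h * r (π n h) x := by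
  have h1 : (fun s : Fin n => (Fin.snoc h x : Fin (n+1) → ℝ) s.castSucc) = h := by
    funext s; simp
  simp only [likeli, h1, Fin.snoc_last]

lemma measurable_likeli (r : Fin K → ℝ → ℝ≥0∞) (hr : ∀ k, Measurable (r k))
    (π : (t : ℕ) → (Fin t → ℝ) → Fin K) (hπ : ∀ t, Measurable (π t)) :
    ∀ n, Measurable (likeli r π n)
  | 0 => measurable_const
  | n + 1 => by
    have hinit : Measurable fun y : Fin (n+1) → ℝ => (fun s : Fin n => y s.castSucc) :=
      measurable_pi_lambda _ fun s => measurable_pi_apply _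
    simp only [likeli]
    exact ((measurable_likeli r hr π hπ n).comp hinit).mul
      (measurable_comp_cases ((hπ n).comp hinit) fun k => (hr k).comp (measurable_pi_apply _))

lemma histMeasure_zero (ν : Fin K → Measure ℝ) (π : (t : ℕ) → (Fin t → ℝ) → Fin K) :
    histMeasure ν π 0 = Measure.dirac (fun i => Fin.elim0 i) := rfl

lemma histMeasure_succ (ν : Fin K → Measure ℝ) (π : (t : ℕ) → (Fin t → ℝ) → Fin K) (n : ℕ) :
    histMeasure ν π (n + 1)
      = (histMeasure ν π n).bind (fun h => (ν (π n h)).map (Fin.snoc h)) := rfl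

lemma isProbabilityMeasure_histMeasure (ν : Fin K → Measure ℝ)
    [∀ k, IsProbabilityMeasure (ν k)]
    (π : (t : ℕ) → (Fin t → ℝ) → Fin K) (hπ : ∀ t, Measurable (π t)) :
    ∀ n, IsProbabilityMeasure (histMeasure ν π n)
  | 0 => by rw [histMeasure_zero]; infer_instance
  | n + 1 => by
    haveI := isProbabilityMeasure_histMeasure ν π hπ n
    constructor
    rw [histMeasure_succ, Measure.bind_apply MeasurableSet.univ (measurable_histKernel ν (hπ n)).aemeasurable]
    have h1 : ∀ h : Fin n → ℝ,
        ((ν (π n h)).map (Fin.snoc h) : Measure (Fin (n+1) → ℝ)) Set.univ = 1 := by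
      intro h
      rw [Measure.map_apply (measurable_snoc_right h) MeasurableSet.univ]
      simp
    simp_rw [h1, lintegral_one, measure_univ]

lemma histMeasure_withDensity (ν : Fin K → Measure ℝ) [∀ k, SFinite (ν k)]
    (r : Fin K → ℝ → ℝ≥0∞) (hr : ∀ k, Measurable (r k))
    (π : (t : ℕ) → (Fin t → ℝ) → Fin K) (hπ : ∀ t, Measurable (π t)) :
    ∀ n, histMeasure (fun k => (ν k).withDensity (r k)) π n
      = (histMeasure ν π n).withDensity (likeli r π n)
  | 0 => by
    rw [histMeasure_zero, histMeasure_zero, show likeli r π 0 = fun _ => 1 from rfl]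
    exact withDensity_one.symm
  | n + 1 => by
    have IH := histMeasure_withDensity ν r hr π hπ n
    have hκ : Measurable fun h : Fin n → ℝ =>
        ((ν (π n h)).map (Fin.snoc h) : Measure (Fin (n+1) → ℝ)) :=
      measurable_histKernel ν (hπ n)
    have hκ' : Measurable fun h : Fin n → ℝ =>
        (((ν (π n h)).withDensity (r (π n h))).map (Fin.snoc h) : Measure (Fin (n+1) → ℝ)) :=
      measurable_histKernel (fun k => (ν k).withDensity (r k)) (hπ n)
    have hL := measurable_likeli r hr π hπ n
    have hL' := measurable_likeli r hr π hπ (n + 1)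
    ext s hs
    have hg' : Measurable fun h : Fin n → ℝ =>
        (((ν (π n h)).withDensity (r (π n h))).map (Fin.snoc h) : Measure (Fin (n+1) → ℝ)) s :=
      (Measure.measurable_coe hs).comp hκ'
    rw [histMeasure_succ, IH, Measure.bind_apply hs hκ'.aemeasurable,
      lintegral_withDensity_eq_lintegral_mul _ hL hg',
      withDensity_apply _ hs, histMeasure_succ, ← lintegral_indicator hs,
      Measure.lintegral_bind hκ.aemeasurable (hL'.indicator hs).aemeasurable]
    refine lintegral_congr fun h => ?_
    have hsnoc := measurable_snoc_right h
    have hpre : MeasurableSet ((fun x : ℝ => (Fin.snoc h x : Fin (n+1) → ℝ)) ⁻¹' s) := hsnoc hs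
    rw [Pi.mul_apply, Measure.map_apply hsnoc hs, withDensity_apply _ hpre,
      lintegral_map (hL'.indicator hs) hsnoc]
    have hind : ∀ x : ℝ, s.indicator (likeli r π (n+1)) (Fin.snoc h x)
        = ((fun x : ℝ => (Fin.snoc h x : Fin (n+1) → ℝ)) ⁻¹' s).indicator
            (fun x => likeli r π n h * r (π n h) x) x := by
      intro x
      by_cases hx : (Fin.snoc h x : Fin (n+1) → ℝ) ∈ s
      · rw [Set.indicator_of_mem hx,
          Set.indicator_of_mem
            (show x ∈ (fun x : ℝ => (Fin.snoc h x : Fin (n+1) → ℝ)) ⁻¹' s from hx), likeli_snoc]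
      · rw [Set.indicator_of_notMem hx,
          Set.indicator_of_notMem
            (show x ∉ (fun x : ℝ => (Fin.snoc h x : Fin (n+1) → ℝ)) ⁻¹' s from hx)]
    simp_rw [hind]
    rw [lintegral_indicator hpre, lintegral_const_mul _ (hr _)]





lemma gaussianPDFReal_tilt (m ε : ℝ) (v : ℝ≥0) (hv : v ≠ 0) (x : ℝ) :
    gaussianPDFReal (m + ε) v x
      = gaussianPDFReal m v x * Real.exp (ε * (x - m) / v - ε ^ 2 / (2 * v)) := by
  have hv' : (0:ℝ) < (v:ℝ) := by
    rcases lt_or_eq_of_le v.2 with h | h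
    · exact h
    · exact absurd (by ext; exact h.symm : v = 0) hv
  have hexp : Real.exp (-(x - (m + ε)) ^ 2 / (2 * v))
      = Real.exp (-(x - m) ^ 2 / (2 * v)) * Real.exp (ε * (x - m) / v - ε ^ 2 / (2 * v)) := by
    rw [← Real.exp_add]
    congr 1
    field_simp
    ring
  simp only [gaussianPDFReal]
  rw [hexp]
  ring

lemma gaussianReal_tilt (m ε : ℝ) (v : ℝ≥0) (hv : v ≠ 0) :
    gaussianReal (m + ε) v = (gaussianReal m v).withDensity
      (fun x => ENNReal.ofReal (Real.exp (ε * (x - m) / v - ε ^ 2 / (2 * v)))) := by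
  have hmeasd : Measurable fun x : ℝ =>
      ENNReal.ofReal (Real.exp (ε * (x - m) / v - ε ^ 2 / (2 * v))) :=
    ENNReal.measurable_ofReal.comp (Real.measurable_exp.comp
      ((((measurable_id.sub_const m).const_mul ε).div_const _).sub_const _))
  rw [gaussianReal_of_var_ne_zero _ hv, gaussianReal_of_var_ne_zero _ hv,
    ← withDensity_mul _ (measurable_gaussianPDF m v) hmeasd]
  congr 1
  funext x
  simp only [Pi.mul_apply, gaussianPDF]
  rw [gaussianPDFReal_tilt m ε v hv x, ENNReal.ofReal_mul (gaussianPDFReal_nonneg m v x)]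

noncomputable def rfun (j : Fin K) (τ ε : ℝ) (v : ℝ≥0) : Fin K → ℝ → ℝ≥0∞ :=
  fun k x => ENNReal.ofReal
    (Real.exp (if k = j then ε * (x - τ) / v - ε ^ 2 / (2 * v) else 0))

lemma measurable_rfun (j : Fin K) (τ ε : ℝ) (v : ℝ≥0) (k : Fin K) :
    Measurable (rfun j τ ε v k) := by
  by_cases h : k = j
  · have h1 : rfun j τ ε v k
        = fun x => ENNReal.ofReal (Real.exp (ε * (x - τ) / v - ε ^ 2 / (2 * v))) := by
      funext x; simp [rfun, h]
    rw [h1]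
    exact ENNReal.measurable_ofReal.comp (Real.measurable_exp.comp
      ((((measurable_id.sub_const τ).const_mul ε).div_const _).sub_const _))
  · have h1 : rfun j τ ε v k = fun _ => ENNReal.ofReal (Real.exp 0) := by
      funext x; simp [rfun, h]
    rw [h1]
    exact measurable_const

lemma gaussian_family_eq (m : Fin K → ℝ) (j : Fin K) (τ ε : ℝ) (v : ℝ≥0) (hv : v ≠ 0) :
    (fun k => gaussianReal (Function.update m j (τ + ε) k) v)
      = fun k => (gaussianReal (Function.update m j τ k) v).withDensity (rfun j τ ε v k) := by
  funext k
  by_cases h : k = j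
  · subst h
    rw [Function.update_self, Function.update_self, gaussianReal_tilt τ ε v hv]
    congr 1
    funext x
    simp [rfun]
  · rw [Function.update_of_ne h, Function.update_of_ne h]
    have h1 : rfun j τ ε v k = 1 := by
      funext x; simp [rfun, if_neg h]
    rw [h1, withDensity_one]

lemma rpow_half_rpow_two (x : ℝ≥0∞) : (x ^ (1/2 : ℝ)) ^ (2 : ℝ) = x := by
  rw [← ENNReal.rpow_mul]
  norm_num

lemma half_mul_half (x : ℝ≥0∞) : x ^ (1/2 : ℝ) * x ^ (1/2 : ℝ) = x := by
  rw [← pow_two, ← ENNReal.rpow_natCast (x ^ (1/2 : ℝ)) 2, ← ENNReal.rpow_mul]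
  norm_num

lemma sq_rpow_half (x : ℝ≥0∞) : (x * x) ^ (1/2 : ℝ) = x := by
  rw [← pow_two, ← ENNReal.rpow_natCast x 2, ← ENNReal.rpow_mul]
  norm_num

lemma key_CS {α : Type*} [MeasurableSpace α] (P : Measure α) [IsProbabilityMeasure P]
    {f g : α → ℝ≥0∞} (hf : Measurable f) (hg : Measurable g)
    (hf1 : ∫⁻ y, f y ∂P = 1) (hg1 : ∫⁻ y, g y ∂P = 1)
    {c : ℝ≥0∞} (hc : ∀ y, c * c ≤ f y * g y) {A : Set α} (hA : MeasurableSet A) :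
    c * c ≤ 2 * (∫⁻ y in A, f y ∂P + ∫⁻ y in Aᶜ, g y ∂P) := by
  set M := ∫⁻ y, min (f y) (g y) ∂P with hM
  have hmin_meas : Measurable fun y => min (f y) (g y) := hf.min hg
  have h1 : M ≤ ∫⁻ y in A, f y ∂P + ∫⁻ y in Aᶜ, g y ∂P := by
    rw [hM, ← lintegral_add_compl (fun y => min (f y) (g y)) hA]
    gcongr
    · exact min_le_left _ _
    · exact min_le_right _ _
  have h2M : c * c ≤ 2 * M := by
    have hpt : ∀ y, c ≤ (min (f y) (g y)) ^ (1/2 : ℝ) * (f y + g y) ^ (1/2 : ℝ) := by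
      intro y
      rw [← ENNReal.mul_rpow_of_nonneg _ _ (by norm_num : (0:ℝ) ≤ 1/2)]
      have h2 : c * c ≤ min (f y) (g y) * (f y + g y) := by
        refine (hc y).trans ?_
        calc f y * g y = min (f y) (g y) * max (f y) (g y) := (min_mul_max _ _).symm
          _ ≤ min (f y) (g y) * (f y + g y) := by
              gcongr
              exact max_le le_self_add le_add_self
      calc c = (c * c) ^ (1/2 : ℝ) := (sq_rpow_half c).symm
        _ ≤ _ := ENNReal.rpow_le_rpow h2 (by norm_num)
    have hCS : c ≤ M ^ (1/2 : ℝ) * 2 ^ (1/2 : ℝ) := by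
      have hu : Measurable fun y => (min (f y) (g y)) ^ (1/2 : ℝ) :=
        hmin_meas.pow measurable_const
      have hw : Measurable fun y => (f y + g y) ^ (1/2 : ℝ) :=
        (hf.add hg).pow measurable_const
      have hint := ENNReal.lintegral_mul_le_Lp_mul_Lq P
        Real.HolderConjugate.two_two
        hu.aemeasurable hw.aemeasurable
      simp only [Pi.mul_apply, rpow_half_rpow_two] at hint
      have hsum : ∫⁻ y, (f y + g y) ∂P = 2 := by
        rw [lintegral_add_left hf, hf1, hg1, one_add_one_eq_two]
      rw [hsum, ← hM] at hint
      refine le_trans ?_ (le_trans hint ?_)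
      · calc c = ∫⁻ _, c ∂P := by simp [lintegral_const]
          _ ≤ _ := lintegral_mono fun y => hpt y
      · norm_num
    calc c * c ≤ (M ^ (1/2 : ℝ) * 2 ^ (1/2 : ℝ)) * (M ^ (1/2 : ℝ) * 2 ^ (1/2 : ℝ)) :=
          mul_le_mul' hCS hCS
      _ = (M ^ (1/2 : ℝ) * M ^ (1/2 : ℝ)) * (2 ^ (1/2 : ℝ) * 2 ^ (1/2 : ℝ)) := by
          rw [mul_mul_mul_comm]
      _ = M * 2 := by rw [half_mul_half, half_mul_half]
      _ = 2 * M := mul_comm _ _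
  exact h2M.trans (by gcongr)





lemma monotone_update_of {m : Fin K → ℝ} (hm : Monotone m) (j : Fin K) (c : ℝ)
    (h1 : ∀ k, k < j → m k ≤ c) (h2 : ∀ k, j < k → c ≤ m k) :
    Monotone (Function.update m j c) := by
  intro a b hab
  by_cases ha : a = j <;> by_cases hb : b = j
  · subst ha; subst hb; exact le_rfl
  · subst ha
    rw [Function.update_self, Function.update_of_ne hb]
    exact h2 b (lt_of_le_of_ne hab (Ne.symm hb))
  · subst hb
    rw [Function.update_of_ne ha, Function.update_self]
    exact h1 a (lt_of_le_of_ne hab ha)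
  · rw [Function.update_of_ne ha, Function.update_of_ne hb]
    exact hm hab

lemma exists_flip (hK : 0 < K) (τ : ℝ) (Δ : Fin K → ℝ) (hΔ : ∀ k, 0 < Δ k)
    (m : Fin K → ℝ) (hm : Monotone m) (hgap : ∀ k, |m k - τ| = Δ k) :
    ∃ j : Fin K, (∀ k, Δ j ≤ Δ k) ∧
      Monotone (Function.update m j (τ + Δ j)) ∧
      Monotone (Function.update m j (τ - Δ j)) := by
  classical
  haveI : Nonempty (Fin K) := ⟨⟨0, hK⟩⟩
  have hside : ∀ k, m k = τ - Δ k ∨ m k = τ + Δ k := by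
    intro k
    have h := hgap k
    rcases abs_cases (m k - τ) with ⟨h1, _⟩ | ⟨h1, _⟩
    · right; linarith [h1 ▸ h]
    · left; linarith [h1 ▸ h]
  obtain ⟨j₀, hj₀⟩ := Finite.exists_min Δ
  rcases hside j₀ with hj₀side | hj₀side
  · -- m j₀ below τ : take the largest below-τ index with minimal gap
    set S : Finset (Fin K) := Finset.univ.filter (fun k => m k < τ ∧ Δ k = Δ j₀) with hS
    have hj₀S : j₀ ∈ S := by
      rw [hS, Finset.mem_filter]
      exact ⟨Finset.mem_univ _, by rw [hj₀side]; linarith [hΔ j₀], rfl⟩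
    set j := S.max' ⟨j₀, hj₀S⟩ with hj
    have hjS : j ∈ S := S.max'_mem _
    obtain ⟨-, hjlt, hjΔ⟩ : j ∈ Finset.univ ∧ m j < τ ∧ Δ j = Δ j₀ := by
      rw [hS, Finset.mem_filter] at hjS; exact ⟨hjS.1, hjS.2⟩
    have hjmin : ∀ k, Δ j ≤ Δ k := fun k => hjΔ ▸ hj₀ k
    have hmj : m j = τ - Δ j := by
      rcases hside j with h | h
      · exact h
      · exfalso; rw [h] at hjlt; linarith [hΔ j]
    refine ⟨j, hjmin, ?_, ?_⟩
    · refine monotone_update_of hm j _ (fun k hk => ?_) (fun k hk => ?_)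
      · have := hm hk.le; linarith [hΔ j]
      · rcases hside k with h | h
        · exfalso
          have hmk : m k < τ := by rw [h]; linarith [hΔ k]
          have h1 : m j ≤ m k := hm hk.le
          have h2 : Δ k ≤ Δ j := by rw [hmj, h] at h1; linarith
          have h3 : Δ k = Δ j₀ := le_antisymm (h2.trans_eq hjΔ) (hj₀ k)
          have hkS : k ∈ S := by rw [hS, Finset.mem_filter]; exact ⟨Finset.mem_univ _, hmk, h3⟩
          exact absurd (S.le_max' k hkS) (not_le.2 hk)
        · rw [h]; linarith [hjmin k]
    · rw [show τ - Δ j = m j from hmj.symm, Function.update_eq_self]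
      exact hm
  · -- m j₀ above τ : take the smallest above-τ index with minimal gap
    set S : Finset (Fin K) := Finset.univ.filter (fun k => τ < m k ∧ Δ k = Δ j₀) with hS
    have hj₀S : j₀ ∈ S := by
      rw [hS, Finset.mem_filter]
      exact ⟨Finset.mem_univ _, by rw [hj₀side]; linarith [hΔ j₀], rfl⟩
    set j := S.min' ⟨j₀, hj₀S⟩ with hj
    have hjS : j ∈ S := S.min'_mem _
    obtain ⟨-, hjgt, hjΔ⟩ : j ∈ Finset.univ ∧ τ < m j ∧ Δ j = Δ j₀ := by
      rw [hS, Finset.mem_filter] at hjS; exact ⟨hjS.1, hjS.2⟩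
    have hjmin : ∀ k, Δ j ≤ Δ k := fun k => hjΔ ▸ hj₀ k
    have hmj : m j = τ + Δ j := by
      rcases hside j with h | h
      · exfalso; rw [h] at hjgt; linarith [hΔ j]
      · exact h
    refine ⟨j, hjmin, ?_, ?_⟩
    · rw [show τ + Δ j = m j from hmj.symm, Function.update_eq_self]
      exact hm
    · refine monotone_update_of hm j _ (fun k hk => ?_) (fun k hk => ?_)
      · rcases hside k with h | h
        · rw [h]; linarith [hjmin k]
        · exfalso
          have hmk : τ < m k := by rw [h]; linarith [hΔ k]
          have h1 : m k ≤ m j := hm hk.le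
          have h2 : Δ k ≤ Δ j := by rw [hmj, h] at h1; linarith
          have h3 : Δ k = Δ j₀ := le_antisymm (h2.trans_eq hjΔ) (hj₀ k)
          have hkS : k ∈ S := by rw [hS, Finset.mem_filter]; exact ⟨Finset.mem_univ _, hmk, h3⟩
          exact absurd (S.min'_le k hkS) (not_le.2 hk)
      · have := hm hk.le; linarith [hΔ j]


lemma le_likeli_mul (π : (t : ℕ) → (Fin t → ℝ) → Fin K) (j : Fin K) (τ ε : ℝ)
    (v : ℝ≥0) (hv : (0:ℝ) < (v:ℝ)) :
    ∀ n (y : Fin n → ℝ),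
      ENNReal.ofReal (Real.exp (-(n : ℝ) * ε ^ 2 / v)) ≤
        likeli (rfun j τ ε v) π n y * likeli (rfun j τ (-ε) v) π n y
  | 0, y => by simp [likeli]
  | n + 1, y => by
    have IH := le_likeli_mul π j τ ε v hv n (fun s => y s.castSucc)
    simp only [likeli]
    set k := π n fun s => y s.castSucc with hk
    set x := y (Fin.last n) with hx
    have hstep : ENNReal.ofReal (Real.exp (-ε ^ 2 / v))
        ≤ rfun j τ ε v k x * rfun j τ (-ε) v k x := by
      simp only [rfun]
      rw [← ENNReal.ofReal_mul (Real.exp_nonneg _), ← Real.exp_add]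
      apply ENNReal.ofReal_le_ofReal
      apply Real.exp_le_exp.2
      by_cases h : k = j
      · simp only [if_pos h]
        have heq : ε * (x - τ) / v - ε ^ 2 / (2 * v)
            + ((-ε) * (x - τ) / v - (-ε) ^ 2 / (2 * v)) = -ε ^ 2 / (v:ℝ) := by
          field_simp
          ring
        exact le_of_eq heq.symm
      · simp only [if_neg h, add_zero]
        apply div_nonpos_of_nonpos_of_nonneg
        · simpa using sq_nonneg ε
        · exact v.2
    calc ENNReal.ofReal (Real.exp (-(((n+1) : ℕ) : ℝ) * ε ^ 2 / v))
        = ENNReal.ofReal (Real.exp (-(n:ℝ) * ε ^ 2 / v))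
            * ENNReal.ofReal (Real.exp (-ε ^ 2 / v)) := by
          rw [← ENNReal.ofReal_mul (Real.exp_nonneg _), ← Real.exp_add]
          congr 2
          push_cast
          field_simp
          ring
      _ ≤ (likeli (rfun j τ ε v) π n (fun s => y s.castSucc)
            * likeli (rfun j τ (-ε) v) π n (fun s => y s.castSucc))
            * (rfun j τ ε v k x * rfun j τ (-ε) v k x) := mul_le_mul' IH hstep
      _ = _ := by rw [mul_mul_mul_comm]

end MonotoneLB

open MonotoneLB in
/-- Problem dependent lower bound for the monotone thresholding bandit problem
(Theorem 1, fixed-budget setting): for any strategy there is a Gaussian bandit problem with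
nondecreasing means and prescribed gaps `Δ` on which the probability of error is at least
`(1/4) · exp(−T·Δ_min²/σ²)`. -/
theorem monotone_lower_bound
    (K T : ℕ) (hK : 3 ≤ K) (hT : 1 ≤ T) (σ τ : ℝ) (hσ : 0 < σ)
    (Δ : Fin K → ℝ) (hΔ : ∀ k, 0 < Δ k)
    (hfeas : ∃ m : Fin K → ℝ, Monotone m ∧ ∀ k, |m k - τ| = Δ k)
    (π : (t : ℕ) → (Fin t → ℝ) → Fin K) (hπ : ∀ t, Measurable (π t))
    (Qhat : (Fin T → ℝ) → Fin K → Bool) (hQhat : Measurable Qhat) :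
    ∃ μ : Fin K → ℝ, Monotone μ ∧ (∀ k, |μ k - τ| = Δ k) ∧
      ENNReal.ofReal ((1 / 4) * Real.exp (-(T : ℝ) * (⨅ k, Δ k) ^ 2 / σ ^ 2)) ≤
        histMeasure (fun k => gaussianReal (μ k) ⟨σ ^ 2, sq_nonneg σ⟩) π T
          (errSet Qhat μ τ) := by
  classical
  obtain ⟨m, hm, hgap⟩ := hfeas
  obtain ⟨j, hjmin, hmono_p, hmono_m⟩ := exists_flip (by omega) τ Δ hΔ m hm hgap
  set v : ℝ≥0 := ⟨σ ^ 2, sq_nonneg σ⟩ with hv_def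
  have hvR : (v : ℝ) = σ ^ 2 := rfl
  have hvpos : (0:ℝ) < (v : ℝ) := by rw [hvR]; positivity
  have hv : v ≠ 0 := by
    intro h0
    have h1 : (v : ℝ) = 0 := by rw [h0]; simp
    rw [hvR] at h1
    nlinarith
  haveI : Nonempty (Fin K) := ⟨j⟩
  have hΔj : (⨅ k, Δ k) = Δ j :=
    le_antisymm (ciInf_le (Set.finite_range Δ).bddBelow j) (le_ciInf hjmin)
  set ε := Δ j with hε
  have hεpos : 0 < ε := hΔ j
  set μp : Fin K → ℝ := Function.update m j (τ + ε) with hμp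
  set μm : Fin K → ℝ := Function.update m j (τ - ε) with hμm
  set μ0 : Fin K → ℝ := Function.update m j τ with hμ0
  -- gap conditions for the two flipped problems
  have hgap_p : ∀ k, |μp k - τ| = Δ k := by
    intro k
    by_cases hk : k = j
    · subst hk
      rw [hμp, Function.update_self, show τ + ε - τ = ε by ring, abs_of_pos hεpos]
    · rw [hμp, Function.update_of_ne hk]
      exact hgap k
  have hgap_m : ∀ k, |μm k - τ| = Δ k := by
    intro k
    by_cases hk : k = j
    · subst hk
      rw [hμm, Function.update_self, show τ - ε - τ = -ε by ring, abs_neg, abs_of_pos hεpos]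
    · rw [hμm, Function.update_of_ne hk]
      exact hgap k
  -- densities w.r.t. the base problem (arm j has mean τ)
  have heqp : (fun k => gaussianReal (μp k) v)
      = fun k => (gaussianReal (μ0 k) v).withDensity (rfun j τ ε v k) :=
    gaussian_family_eq m j τ ε v hv
  have heqm : (fun k => gaussianReal (μm k) v)
      = fun k => (gaussianReal (μ0 k) v).withDensity (rfun j τ (-ε) v k) := by
    have := gaussian_family_eq m j τ (-ε) v hv
    rw [show τ + -ε = τ - ε by ring] at this
    exact this
  set P0 := histMeasure (fun k => gaussianReal (μ0 k) v) π T with hP0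
  haveI : IsProbabilityMeasure P0 :=
    isProbabilityMeasure_histMeasure (fun k => gaussianReal (μ0 k) v) π hπ T
  set Lp := likeli (rfun j τ ε v) π T with hLp
  set Lm := likeli (rfun j τ (-ε) v) π T with hLm
  have hLp_meas : Measurable Lp := measurable_likeli _ (measurable_rfun j τ ε v) π hπ T
  have hLm_meas : Measurable Lm := measurable_likeli _ (measurable_rfun j τ (-ε) v) π hπ T
  have hdp : histMeasure (fun k => gaussianReal (μp k) v) π T = P0.withDensity Lp := by
    rw [heqp]
    exact histMeasure_withDensity _ _ (measurable_rfun j τ ε v) π hπ T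
  have hdm : histMeasure (fun k => gaussianReal (μm k) v) π T = P0.withDensity Lm := by
    rw [heqm]
    exact histMeasure_withDensity _ _ (measurable_rfun j τ (-ε) v) π hπ T
  have hLp1 : ∫⁻ y, Lp y ∂P0 = 1 := by
    have h1 := (isProbabilityMeasure_histMeasure
      (fun k => gaussianReal (μp k) v) π hπ T).measure_univ
    rw [hdp, withDensity_apply _ MeasurableSet.univ, setLIntegral_univ] at h1
    exact h1
  have hLm1 : ∫⁻ y, Lm y ∂P0 = 1 := by
    have h1 := (isProbabilityMeasure_histMeasure
      (fun k => gaussianReal (μm k) v) π hπ T).measure_univ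
    rw [hdm, withDensity_apply _ MeasurableSet.univ, setLIntegral_univ] at h1
    exact h1
  -- pointwise two-sided likelihood bound
  set c : ℝ≥0∞ := ENNReal.ofReal (Real.exp (-(T : ℝ) * ε ^ 2 / v / 2)) with hc_def
  have hcc : c * c = ENNReal.ofReal (Real.exp (-(T : ℝ) * ε ^ 2 / (v : ℝ))) := by
    rw [hc_def, ← ENNReal.ofReal_mul (Real.exp_nonneg _), ← Real.exp_add]
    congr 2
    ring
  have hpt : ∀ y, c * c ≤ Lp y * Lm y := by
    intro y
    rw [hcc]
    exact le_likeli_mul π j τ ε v hvpos T y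
  set A : Set (Fin T → ℝ) := (fun y => Qhat y j) ⁻¹' {false} with hA_def
  have hA : MeasurableSet A :=
    ((measurable_pi_apply j).comp hQhat) (measurableSet_singleton false)
  have hCS := key_CS P0 hLp_meas hLm_meas hLp1 hLm1 hpt hA
  -- error-set inclusions
  have hsubp : A ⊆ errSet Qhat μp τ := by
    intro y hy
    refine ⟨j, ?_⟩
    have hyq : Qhat y j = false := by simpa [hA_def] using hy
    have hle : τ ≤ μp j := by
      rw [hμp, Function.update_self]; linarith
    have e1 : (Qhat y j = true) = False := by simp [hyq]
    have e2 : (τ ≤ μp j) = True := by simp [hle]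
    rw [e1, e2]
    simp
  have hsubm : Aᶜ ⊆ errSet Qhat μm τ := by
    intro y hy
    refine ⟨j, ?_⟩
    have hyq : Qhat y j = true := by
      have : Qhat y j ≠ false := by simpa [hA_def] using hy
      simpa using this
    have hle : ¬ (τ ≤ μm j) := by
      rw [hμm, Function.update_self]; push_neg; linarith
    have e1 : (Qhat y j = true) = True := by simp [hyq]
    have e2 : (τ ≤ μm j) = False := by simp [hle]
    rw [e1, e2]
    simp
  -- bound the error probabilities
  have hup : ∫⁻ y in A, Lp y ∂P0
      ≤ histMeasure (fun k => gaussianReal (μp k) v) π T (errSet Qhat μp τ) := by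
    rw [hdp]
    calc ∫⁻ y in A, Lp y ∂P0 = (P0.withDensity Lp) A := (withDensity_apply _ hA).symm
      _ ≤ _ := measure_mono hsubp
  have hum : ∫⁻ y in Aᶜ, Lm y ∂P0
      ≤ histMeasure (fun k => gaussianReal (μm k) v) π T (errSet Qhat μm τ) := by
    rw [hdm]
    calc ∫⁻ y in Aᶜ, Lm y ∂P0 = (P0.withDensity Lm) Aᶜ := (withDensity_apply _ hA.compl).symm
      _ ≤ _ := measure_mono hsubm
  -- conclude
  by_cases hch : ENNReal.ofReal ((1/4) * Real.exp (-(T:ℝ) * (⨅ k, Δ k)^2 / σ^2))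
      ≤ histMeasure (fun k => gaussianReal (μp k) v) π T (errSet Qhat μp τ)
  · exact ⟨μp, hmono_p, hgap_p, hch⟩
  · refine ⟨μm, hmono_m, hgap_m, ?_⟩
    by_contra hch2
    push_neg at hch hch2
    set q : ℝ≥0∞ := ENNReal.ofReal ((1/4) * Real.exp (-(T:ℝ) * (⨅ k, Δ k)^2 / σ^2)) with hq
    have h4 : (2:ℝ≥0∞) * (q + q) = c * c := by
      rw [hcc, hq, ← ENNReal.ofReal_add (by positivity) (by positivity),
        show (2:ℝ≥0∞) = ENNReal.ofReal (2:ℝ) by simp,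
        ← ENNReal.ofReal_mul (by norm_num : (0:ℝ) ≤ 2)]
      congr 1
      rw [hΔj, hvR]
      ring
    have hlt : ∫⁻ y in A, Lp y ∂P0 + ∫⁻ y in Aᶜ, Lm y ∂P0 < q + q :=
      ENNReal.add_lt_add (lt_of_le_of_lt hup hch) (lt_of_le_of_lt hum hch2)
    have hcon : c * c < c * c := by
      calc c * c ≤ 2 * (∫⁻ y in A, Lp y ∂P0 + ∫⁻ y in Aᶜ, Lm y ∂P0) := hCS
        _ < 2 * (q + q) := by
            exact (ENNReal.mul_lt_mul_iff_right (by norm_num) (by norm_num)).2 hlt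
        _ = c * c := h4
    exact absurd hcon (lt_irrefl _)
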